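/- For n ≥ 3 and m ≥ 1, the metric dimension of the Cartesian product Kₙ × Pₘ equals n − 1. -/

import Mathlib

open SimpleGraph

/-- Corona `G ⊙ K₁`: attach to each vertex `v` (as `Sum.inl v`) a pendant vertex `Sum.inr v`. -/
def corona {V : Type*} (G : SimpleGraph V) : SimpleGraph (V ⊕ V) :=
  SimpleGraph.fromRel (fun a b =>
    match a, b with
    | Sum.inl x, Sum.inl y => G.Adj x y
    | Sum.inl x, Sum.inr y => x = y
    | _, _ => False)

/-- `S` is a resolving set for `G`: distinct vertices have distinct distance vectors to `S`. -/
def IsResolving {V : Type*} (G : SimpleGraph V) (S : Set V) : Prop :=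
  ∀ u v : V, (∀ s ∈ S, G.dist u s = G.dist v s) → u = v

/-- Metric dimension: minimum cardinality of a resolving set. -/
noncomputable def metricDim {V : Type*} [Fintype V] (G : SimpleGraph V) : ℕ :=
  sInf {k | ∃ S : Finset V, S.card = k ∧ IsResolving G (↑S : Set V)}

private lemma walk_ge_boxProd {α β : Type*} {G : SimpleGraph α} {H : SimpleGraph β}
    (hG : G.Connected) (hH : H.Connected) {x y : α × β} (p : (G □ H).Walk x y) :
    G.dist x.1 y.1 + H.dist x.2 y.2 ≤ p.length := by
  induction p with
  | nil => simp
  | @cons a b c h q ih =>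
    rw [Walk.length_cons]
    rcases boxProd_adj.mp h with ⟨h1, h2⟩ | ⟨h2, h1⟩
    · have t1 : G.dist a.1 c.1 ≤ G.dist a.1 b.1 + G.dist b.1 c.1 := hG.dist_triangle
      have hd : G.dist a.1 b.1 = 1 := dist_eq_one_iff_adj.mpr h1
      have h2' : H.dist a.2 c.2 = H.dist b.2 c.2 := by rw [h2]
      omega
    · have t1 : H.dist a.2 c.2 ≤ H.dist a.2 b.2 + H.dist b.2 c.2 := hH.dist_triangle
      have hd : H.dist a.2 b.2 = 1 := dist_eq_one_iff_adj.mpr h2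
      have h1' : G.dist a.1 c.1 = G.dist b.1 c.1 := by rw [h1]
      omega

private lemma boxProd_dist {α β : Type*} {G : SimpleGraph α} {H : SimpleGraph β}
    (hG : G.Connected) (hH : H.Connected) (a c : α) (b d : β) :
    (G □ H).dist (a, b) (c, d) = G.dist a c + H.dist b d := by
  obtain ⟨p, hp⟩ := hG.exists_walk_length_eq_dist a c
  obtain ⟨q, hq⟩ := hH.exists_walk_length_eq_dist b d
  apply le_antisymm
  · have := dist_le ((p.boxProdLeft H b).append (q.boxProdRight G c))
    have e1 : (p.boxProdLeft H b).length = p.length := by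
      unfold Walk.boxProdLeft; exact Walk.length_map _ _
    have e2 : (q.boxProdRight G c).length = q.length := by
      unfold Walk.boxProdRight; exact Walk.length_map _ _
    rwa [Walk.length_append, e1, e2, hp, hq] at this
  · obtain ⟨r, hr⟩ := (hG.boxProd hH).exists_walk_length_eq_dist (a, b) (c, d)
    have := walk_ge_boxProd hG hH r
    simp only [hr] at this
    exact this

private lemma pathGraph_dist_le {m : ℕ} : ∀ (k : ℕ) (a b : Fin (m + 1)),
    (a.val - b.val) + (b.val - a.val) = k → (pathGraph (m + 1)).dist a b ≤ k := by
  intro k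
  induction k with
  | zero =>
    intro a b hab
    have : a = b := Fin.ext (by omega)
    simp [this]
  | succ k ih =>
    intro a b hab
    rcases lt_or_gt_of_ne (show a.val ≠ b.val by omega) with hlt | hgt
    · set a' : Fin (m + 1) := ⟨a.val + 1, by omega⟩ with ha'
      have hadj : (pathGraph (m + 1)).Adj a a' := pathGraph_adj.mpr (Or.inl rfl)
      have := (pathGraph_connected m).dist_triangle (u := a) (v := a') (w := b)
      have h1 : (pathGraph (m + 1)).dist a a' = 1 := dist_eq_one_iff_adj.mpr hadj
      have h2 : (pathGraph (m + 1)).dist a' b ≤ k := ih a' b (by simp [ha']; omega)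
      omega
    · set a' : Fin (m + 1) := ⟨a.val - 1, by omega⟩ with ha'
      have hadj : (pathGraph (m + 1)).Adj a a' := pathGraph_adj.mpr (Or.inr (by simp [ha']; omega))
      have := (pathGraph_connected m).dist_triangle (u := a) (v := a') (w := b)
      have h1 : (pathGraph (m + 1)).dist a a' = 1 := dist_eq_one_iff_adj.mpr hadj
      have h2 : (pathGraph (m + 1)).dist a' b ≤ k := ih a' b (by simp [ha']; omega)
      omega

private lemma pathGraph_walk_ge {m : ℕ} {a b : Fin m} (p : (pathGraph m).Walk a b) :
    (a.val - b.val) + (b.val - a.val) ≤ p.length := by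
  induction p with
  | nil => simp
  | @cons a c b h q ih =>
    rw [Walk.length_cons]
    rcases pathGraph_adj.mp h with h1 | h1 <;> omega

private lemma pathGraph_dist {m : ℕ} (a b : Fin (m + 1)) :
    (pathGraph (m + 1)).dist a b = (a.val - b.val) + (b.val - a.val) := by
  apply le_antisymm (pathGraph_dist_le _ a b rfl)
  obtain ⟨p, hp⟩ := (pathGraph_connected m).exists_walk_length_eq_dist a b
  have := pathGraph_walk_ge p
  omega

theorem stmt_9 (n m : ℕ) (hn : 3 ≤ n) (hm : 1 ≤ m) :
    metricDim ((⊤ : SimpleGraph (Fin n)) □ pathGraph m) = n - 1 := by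
  obtain ⟨m', rfl⟩ : ∃ m', m = m' + 1 := ⟨m - 1, by omega⟩
  have hne : Nonempty (Fin n) := ⟨⟨0, by omega⟩⟩
  have hGc : (⊤ : SimpleGraph (Fin n)).Connected := connected_top
  have hHc : (pathGraph (m' + 1)).Connected := pathGraph_connected m'
  have hdist : ∀ (u v : Fin n) (t s : Fin (m' + 1)),
      ((⊤ : SimpleGraph (Fin n)) □ pathGraph (m' + 1)).dist (u, t) (v, s)
        = (if u = v then 0 else 1) + ((t.val - s.val) + (s.val - t.val)) := by
    intro u v t s
    rw [boxProd_dist hGc hHc, pathGraph_dist, dist_top]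
  have third : ∀ a b : Fin n, ∃ w : Fin n, w ≠ a ∧ w ≠ b := by
    intro a b
    have hc2 : ({a, b} : Finset (Fin n)).card ≤ 2 := Finset.card_le_two
    have hcs : ((Finset.univ : Finset (Fin n)) \ {a, b}).card
        = n - ({a, b} : Finset (Fin n)).card := by
      rw [Finset.card_sdiff_of_subset (Finset.subset_univ _), Finset.card_univ, Fintype.card_fin]
    have : ((Finset.univ : Finset (Fin n)) \ {a, b}).Nonempty :=
      Finset.card_pos.mp (by omega)
    obtain ⟨w, hw⟩ := this
    rw [Finset.mem_sdiff, Finset.mem_insert, Finset.mem_singleton] at hw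
    exact ⟨w, fun h => hw.2 (Or.inl h), fun h => hw.2 (Or.inr h)⟩
  set z0 : Fin (m' + 1) := ⟨0, Nat.succ_pos _⟩ with hz0
  set x0 : Fin n := ⟨0, by omega⟩ with hx0
  apply le_antisymm
  · -- upper bound: exhibit a resolving set of size n - 1
    apply Nat.sInf_le
    refine ⟨(Finset.univ.erase x0).image (fun v => (v, z0)), ?_, ?_⟩
    · rw [Finset.card_image_of_injective _ (fun a b h => by
        simpa using congrArg Prod.fst h), Finset.card_erase_of_mem (Finset.mem_univ _),
        Finset.card_univ, Fintype.card_fin]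
    · rintro ⟨u, t⟩ ⟨v, s⟩ h
      have key : ∀ w : Fin n, w ≠ x0 →
          (if u = w then 0 else 1) + t.val = (if v = w then 0 else 1) + s.val := by
        intro w hw
        have := h (w, z0) (by simp [hw])
        rw [hdist, hdist] at this
        simpa [hz0] using this
      by_cases huv : u = v
      · subst huv
        obtain ⟨w, hw1, hw2⟩ := third x0 u
        have := key w hw1
        rw [if_neg (fun hh => hw2 hh.symm)] at this
        have hts : t = s := Fin.ext (by omega)
        rw [hts]
      · exfalso
        by_cases hu : u = x0
        · have hv : v ≠ x0 := fun hh => huv (hu.trans hh.symm)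
          have k1 := key v hv
          rw [if_neg huv, if_pos rfl] at k1
          obtain ⟨w, hw1, hw2⟩ := third x0 v
          have k2 := key w hw1
          rw [if_neg (fun hh => hw1 (hh.symm.trans hu)), if_neg (fun hh => hw2 hh.symm)] at k2
          omega
        · have k1 := key u hu
          rw [if_pos rfl, if_neg (fun hh => huv hh.symm)] at k1
          by_cases hv : v = x0
          · obtain ⟨w, hw1, hw2⟩ := third x0 u
            have k2 := key w hw1
            rw [if_neg (fun hh => hw2 hh.symm),
              if_neg (fun hh => hw1 (hh.symm.trans hv))] at k2
            omega
          · have k2 := key v hv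
            rw [if_neg huv, if_pos rfl] at k2
            omega
  · -- lower bound
    apply le_csInf
    · refine ⟨n - 1, (Finset.univ.erase x0).image (fun v => (v, z0)), ?_, ?_⟩
      · rw [Finset.card_image_of_injective _ (fun a b h => by
          simpa using congrArg Prod.fst h), Finset.card_erase_of_mem (Finset.mem_univ _),
          Finset.card_univ, Fintype.card_fin]
      · rintro ⟨u, t⟩ ⟨v, s⟩ h
        have key : ∀ w : Fin n, w ≠ x0 →
            (if u = w then 0 else 1) + t.val = (if v = w then 0 else 1) + s.val := by
          intro w hw
          have := h (w, z0) (by simp [hw])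
          rw [hdist, hdist] at this
          simpa [hz0] using this
        by_cases huv : u = v
        · subst huv
          obtain ⟨w, hw1, hw2⟩ := third x0 u
          have := key w hw1
          rw [if_neg (fun hh => hw2 hh.symm)] at this
          have hts : t = s := Fin.ext (by omega)
          rw [hts]
        · exfalso
          by_cases hu : u = x0
          · have hv : v ≠ x0 := fun hh => huv (hu.trans hh.symm)
            have k1 := key v hv
            rw [if_neg huv, if_pos rfl] at k1
            obtain ⟨w, hw1, hw2⟩ := third x0 v
            have k2 := key w hw1
            rw [if_neg (fun hh => hw1 (hh.symm.trans hu)), if_neg (fun hh => hw2 hh.symm)] at k2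
            omega
          · have k1 := key u hu
            rw [if_pos rfl, if_neg (fun hh => huv hh.symm)] at k1
            by_cases hv : v = x0
            · obtain ⟨w, hw1, hw2⟩ := third x0 u
              have k2 := key w hw1
              rw [if_neg (fun hh => hw2 hh.symm),
                if_neg (fun hh => hw1 (hh.symm.trans hv))] at k2
              omega
            · have k2 := key v hv
              rw [if_neg huv, if_pos rfl] at k2
              omega
    · rintro k ⟨S, hcard, hres⟩
      by_contra hlt
      push_neg at hlt
      set T : Finset (Fin n) := S.image Prod.fst with hT
      have hTcard : T.card ≤ k := hcard ▸ Finset.card_image_le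
      have hcs : ((Finset.univ : Finset (Fin n)) \ T).card = n - T.card := by
        rw [Finset.card_sdiff_of_subset (Finset.subset_univ _), Finset.card_univ, Fintype.card_fin]
      have h2 : 1 < ((Finset.univ : Finset (Fin n)) \ T).card := by omega
      obtain ⟨a, ha, b, hb, hab⟩ := Finset.one_lt_card.mp h2
      rw [Finset.mem_sdiff] at ha hb
      have : ((a, z0) : Fin n × Fin (m' + 1)) = (b, z0) := by
        apply hres
        rintro ⟨w, r⟩ hw
        have hwT : w ∈ T := Finset.mem_image.mpr ⟨(w, r), hw, rfl⟩
        have haw : a ≠ w := fun h => ha.2 (h ▸ hwT)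
        have hbw : b ≠ w := fun h => hb.2 (h ▸ hwT)
        rw [hdist, hdist, if_neg haw, if_neg hbw]
      exact hab (congrArg Prod.fst this)
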